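/- Let G be a connected finite simple graph that is not complete and has a trapezoid representation a, b, c, d. For real numbers x, y, call a vertex i left of the cut line (x, y) if b i < x and d i < y, right if x < a i and y < c i, and crossing otherwise; let N(x, y) be the number of crossing vertices. Then the vertex connectivity κ(G), i.e., the minimum cardinality of a set of vertices whose deletion disconnects G, equals the minimum of N(x, y) over all pairs (x, y) for which at least one vertex is left and at least one vertex is right of the cut line (x, y). -/

import Mathlib

/-- A trapezoid representation of a finite simple graph `G`. -/
def IsTrapRep {V : Type*} (G : SimpleGraph V) (a b c d : V → ℝ) : Prop :=
  (∀ i, a i ≤ b i) ∧ (∀ i, c i ≤ d i) ∧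
  Function.Injective (fun p : V × Bool => if p.2 then b p.1 else a p.1) ∧
  Function.Injective (fun p : V × Bool => if p.2 then d p.1 else c p.1) ∧
  ∀ i j : V, i ≠ j →
    (G.Adj i j ↔ ¬((b i < a j ∧ d i < c j) ∨ (b j < a i ∧ d j < c i)))

section Aux

variable {V : Type*} {G : SimpleGraph V} {a b c d : V → ℝ}

/-- Two distinct nonadjacent vertices are comparable in the trapezoid order. -/
lemma IsTrapRep.trich (hrep : IsTrapRep G a b c d) {i j : V} (hij : i ≠ j)
    (hadj : ¬ G.Adj i j) :
    (b i < a j ∧ d i < c j) ∨ (b j < a i ∧ d j < c i) := by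
  by_contra h
  exact hadj ((hrep.2.2.2.2 i j hij).2 h)

/-- A cut line with a vertex on each side disconnects the graph after
removing the crossing vertices. -/
lemma IsTrapRep.not_connected_of_cut (hrep : IsTrapRep G a b c d) (x y : ℝ)
    (hl : ∃ i, b i < x ∧ d i < y) (hr : ∃ j, x < a j ∧ y < c j) :
    ¬ (G.induce {i : V | ¬(b i < x ∧ d i < y) ∧ ¬(x < a i ∧ y < c i)}ᶜ).Connected := by
  obtain ⟨i0, hi0⟩ := hl
  obtain ⟨j0, hj0⟩ := hr
  set S : Set V := {i : V | ¬(b i < x ∧ d i < y) ∧ ¬(x < a i ∧ y < c i)} with hSdef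
  have hmem : ∀ i : V, i ∈ Sᶜ ↔ (b i < x ∧ d i < y) ∨ (x < a i ∧ y < c i) := by
    intro i
    simp only [hSdef, Set.mem_compl_iff, Set.mem_setOf_eq]
    tauto
  have hi0' : i0 ∈ Sᶜ := (hmem i0).2 (Or.inl hi0)
  have hj0' : j0 ∈ Sᶜ := (hmem j0).2 (Or.inr hj0)
  intro hconn
  obtain ⟨p⟩ := hconn.preconnected ⟨i0, hi0'⟩ ⟨j0, hj0'⟩
  have key : ∀ (w₁ w₂ : ↥Sᶜ) (_ : (G.induce Sᶜ).Walk w₁ w₂),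
      (b ↑w₁ < x ∧ d ↑w₁ < y) → (b ↑w₂ < x ∧ d ↑w₂ < y) := by
    intro w₁ w₂ p
    induction p with
    | nil => exact id
    | @cons x₁ x₂ x₃ h q ih =>
      intro hw
      apply ih
      have hadj : G.Adj ↑x₁ ↑x₂ := h
      rcases (hmem ↑x₂).1 x₂.2 with hml | hmr
      · exact hml
      · exfalso
        have hne : (↑x₁ : V) ≠ ↑x₂ := hadj.ne
        have := (hrep.2.2.2.2 ↑x₁ ↑x₂ hne).1 hadj
        exact this (Or.inl ⟨hw.1.trans hmr.1, hw.2.trans hmr.2⟩)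
  have h1 := (key _ _ p hi0).1
  have h2 := hrep.1 j0
  linarith [hj0.1]

/-- A vertex cut with nonempty complement yields a cut line whose crossing
vertices are contained in the cut. -/
lemma IsTrapRep.cut_to_line [Finite V] (hrep : IsTrapRep G a b c d) (S : Set V)
    (hnc : ¬ (G.induce Sᶜ).Connected) (hne : Sᶜ.Nonempty) :
    ∃ x y : ℝ, (∃ i, b i < x ∧ d i < y) ∧ (∃ j, x < a j ∧ y < c j) ∧
      {i : V | ¬(b i < x ∧ d i < y) ∧ ¬(x < a i ∧ y < c i)} ⊆ S := by
  have hnsub : Nonempty ↥Sᶜ := hne.to_subtype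
  have hpre : ¬ (G.induce Sᶜ).Preconnected := fun h => hnc ⟨h⟩
  -- a vertex with minimal `b`-value
  obtain ⟨u, hu⟩ := Finite.exists_min (fun w : ↥Sᶜ => b ↑w)
  -- a vertex not reachable from `u`
  have hv : ∃ v : ↥Sᶜ, ¬ (G.induce Sᶜ).Reachable u v := by
    by_contra h
    push_neg at h
    exact hpre fun p q => (h p).symm.trans (h q)
  obtain ⟨v, hv⟩ := hv
  -- reachable and unreachable vertices are nonadjacent and distinct
  have keyA : ∀ z w : ↥Sᶜ, (G.induce Sᶜ).Reachable u z → ¬ (G.induce Sᶜ).Reachable u w →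
      ¬ G.Adj ↑z ↑w ∧ (↑z : V) ≠ ↑w := by
    intro z w hz hw
    refine ⟨fun hadj => hw (hz.trans (SimpleGraph.Adj.reachable
      (show (G.induce Sᶜ).Adj z w from hadj))), fun he => ?_⟩
    have : z = w := Subtype.coe_injective he
    exact hw (this ▸ hz)
  -- every reachable vertex lies strictly left of every unreachable vertex
  have keyL : ∀ w : ↥Sᶜ, ¬ (G.induce Sᶜ).Reachable u w →
      ∀ z : ↥Sᶜ, (G.induce Sᶜ).Reachable u z → b ↑z < a ↑w ∧ d ↑z < c ↑w := by
    intro w hw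
    have base : b ↑u < a ↑w ∧ d ↑u < c ↑w := by
      obtain ⟨hna, hne'⟩ := keyA u w (SimpleGraph.Reachable.refl u) hw
      rcases hrep.trich hne' hna with h | h
      · exact h
      · exfalso
        have h1 := hrep.1 (↑u : V)
        have h2 := hu w
        try simp only at h2
        linarith [h.1]
    intro z hz
    obtain ⟨p⟩ := hz
    have step : ∀ (z₁ z₂ : ↥Sᶜ) (_ : (G.induce Sᶜ).Walk z₁ z₂),
        (G.induce Sᶜ).Reachable u z₁ → (b ↑z₁ < a ↑w ∧ d ↑z₁ < c ↑w) →
        (b ↑z₂ < a ↑w ∧ d ↑z₂ < c ↑w) := by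
      intro z₁ z₂ p
      induction p with
      | nil => exact fun _ h => h
      | @cons x₁ x₂ x₃ h q ih =>
        intro hr hx
        have hr2 : (G.induce Sᶜ).Reachable u x₂ := hr.trans (SimpleGraph.Adj.reachable h)
        have hadj : G.Adj ↑x₁ ↑x₂ := h
        apply ih hr2
        obtain ⟨hna, hne'⟩ := keyA x₂ w hr2 hw
        rcases hrep.trich hne' hna with h' | h'
        · exact h'
        · exfalso
          have := (hrep.2.2.2.2 ↑x₁ ↑x₂ hadj.ne).1 hadj
          have ha := hrep.1 (↑w : V)
          have hc := hrep.2.1 (↑w : V)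
          exact this (Or.inl ⟨by linarith [hx.1, h'.1], by linarith [hx.2, h'.2]⟩)
    exact step u z p (SimpleGraph.Reachable.refl u) base
  -- extremal vertices
  have hCfin : ({z : ↥Sᶜ | (G.induce Sᶜ).Reachable u z}).Finite := Set.toFinite _
  have hRfin : ({z : ↥Sᶜ | ¬ (G.induce Sᶜ).Reachable u z}).Finite := Set.toFinite _
  obtain ⟨i0, hi0r, hi0⟩ := Set.exists_max_image {z : ↥Sᶜ | (G.induce Sᶜ).Reachable u z}
    (fun z => b ↑z) hCfin ⟨u, SimpleGraph.Reachable.refl u⟩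
  obtain ⟨i1, hi1r, hi1⟩ := Set.exists_max_image {z : ↥Sᶜ | (G.induce Sᶜ).Reachable u z}
    (fun z => d ↑z) hCfin ⟨u, SimpleGraph.Reachable.refl u⟩
  obtain ⟨j0, hj0r, hj0⟩ := Set.exists_min_image {z : ↥Sᶜ | ¬ (G.induce Sᶜ).Reachable u z}
    (fun z => a ↑z) hRfin ⟨v, hv⟩
  obtain ⟨j1, hj1r, hj1⟩ := Set.exists_min_image {z : ↥Sᶜ | ¬ (G.induce Sᶜ).Reachable u z}
    (fun z => c ↑z) hRfin ⟨v, hv⟩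
  have hba : b ↑i0 < a ↑j0 := (keyL j0 hj0r i0 hi0r).1
  have hdc : d ↑i1 < c ↑j1 := (keyL j1 hj1r i1 hi1r).2
  refine ⟨(b ↑i0 + a ↑j0) / 2, (d ↑i1 + c ↑j1) / 2, ⟨↑u, ?_, ?_⟩, ⟨↑v, ?_, ?_⟩, ?_⟩
  · have := hi0 u (SimpleGraph.Reachable.refl u); (try simp only at this); linarith
  · have := hi1 u (SimpleGraph.Reachable.refl u); (try simp only at this); linarith
  · have := hj0 v hv; (try simp only at this); linarith
  · have := hj1 v hv; (try simp only at this); linarith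
  · intro i hi
    by_contra his
    have hiSc : i ∈ Sᶜ := his
    set z : ↥Sᶜ := ⟨i, hiSc⟩ with hz
    by_cases hrz : (G.induce Sᶜ).Reachable u z
    · have h1 := hi0 z hrz
      have h2 := hi1 z hrz
      try simp only at h1 h2
      exact hi.1 ⟨by linarith, by linarith⟩
    · have h1 := hj0 z hrz
      have h2 := hj1 z hrz
      try simp only at h1 h2
      exact hi.2 ⟨by linarith, by linarith⟩

end Aux

/-- For a connected non-complete trapezoid graph `G`, the vertex connectivity
(the minimum cardinality of a set of vertices whose deletion disconnects `G`)
equals the minimum number `N (x, y)` of trapezoids crossing a cut line `(x, y)`,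
taken over all cut lines having at least one trapezoid entirely to the left
and at least one entirely to the right. -/
theorem vertexConnectivity_eq_min_cutLine {V : Type*} [Fintype V] (G : SimpleGraph V)
    (a b c d : V → ℝ) (hrep : IsTrapRep G a b c d)
    (hconn : G.Connected) (hnotcomplete : G ≠ ⊤) :
    sInf {n : ℕ | ∃ S : Set V, ¬ (G.induce Sᶜ).Connected ∧ n = S.ncard} =
    sInf {n : ℕ | ∃ x y : ℝ,
      (∃ i, b i < x ∧ d i < y) ∧ (∃ j, x < a j ∧ y < c j) ∧
      n = {i : V | ¬(b i < x ∧ d i < y) ∧ ¬(x < a i ∧ y < c i)}.ncard} := by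
  classical
  set A : Set ℕ := {n : ℕ | ∃ S : Set V, ¬ (G.induce Sᶜ).Connected ∧ n = S.ncard} with hA
  set B : Set ℕ := {n : ℕ | ∃ x y : ℝ,
      (∃ i, b i < x ∧ d i < y) ∧ (∃ j, x < a j ∧ y < c j) ∧
      n = {i : V | ¬(b i < x ∧ d i < y) ∧ ¬(x < a i ∧ y < c i)}.ncard} with hB
  -- a nonadjacent pair of distinct vertices
  have hex : ∃ u v : V, b u < a v ∧ d u < c v := by
    have hne : ∃ u v : V, u ≠ v ∧ ¬ G.Adj u v := by
      by_contra h
      push_neg at h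
      apply hnotcomplete
      ext u v
      simp only [SimpleGraph.top_adj]
      exact ⟨fun h' => h'.ne, fun h' => h u v h'⟩
    obtain ⟨u, v, huv, hnadj⟩ := hne
    rcases hrep.trich huv hnadj with h | h
    · exact ⟨u, v, h⟩
    · exact ⟨v, u, h⟩
  obtain ⟨u, v, hul⟩ := hex
  set x0 : ℝ := (b u + a v) / 2 with hx0
  set y0 : ℝ := (d u + c v) / 2 with hy0
  have hL : b u < x0 ∧ d u < y0 := ⟨by simp only [hx0]; linarith [hul.1], by simp only [hy0]; linarith [hul.2]⟩
  have hR : x0 < a v ∧ y0 < c v := ⟨by simp only [hx0]; linarith [hul.1], by simp only [hy0]; linarith [hul.2]⟩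
  set S0 : Set V := {i : V | ¬(b i < x0 ∧ d i < y0) ∧ ¬(x0 < a i ∧ y0 < c i)} with hS0
  set n0 : ℕ := S0.ncard with hn0
  have hn0B : n0 ∈ B := ⟨x0, y0, ⟨u, hL⟩, ⟨v, hR⟩, rfl⟩
  have hn0A : n0 ∈ A := ⟨S0, hrep.not_connected_of_cut x0 y0 ⟨u, hL⟩ ⟨v, hR⟩, rfl⟩
  have hAne : A.Nonempty := ⟨n0, hn0A⟩
  have hBne : B.Nonempty := ⟨n0, hn0B⟩
  -- direction 1 : sInf A ≤ sInf B
  have hAB : sInf A ≤ sInf B := by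
    obtain ⟨x, y, hxl, hxr, heq⟩ := Nat.sInf_mem hBne
    exact Nat.sInf_le ⟨_, hrep.not_connected_of_cut x y hxl hxr, heq⟩
  -- direction 2 : sInf B ≤ sInf A
  have hBA : sInf B ≤ sInf A := by
    obtain ⟨S, hS, hcard⟩ := Nat.sInf_mem hAne
    have hScne : Sᶜ.Nonempty := by
      rw [Set.nonempty_iff_ne_empty]
      intro h
      have hSuniv : S = Set.univ := Set.compl_empty_iff.1 h
      have h1 : sInf A ≤ n0 := Nat.sInf_le hn0A
      have hss : S0 ⊂ Set.univ := Set.ssubset_univ_iff.2 (by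
        intro he
        have : u ∈ S0 := he ▸ Set.mem_univ u
        exact this.1 hL)
      have h2 : n0 < (Set.univ : Set V).ncard := Set.ncard_lt_ncard hss Set.finite_univ
      rw [hSuniv] at hcard
      omega
    obtain ⟨x, y, hxl, hxr, hsub⟩ := hrep.cut_to_line S hS hScne
    have hle : {i : V | ¬(b i < x ∧ d i < y) ∧ ¬(x < a i ∧ y < c i)}.ncard ≤ S.ncard :=
      Set.ncard_le_ncard hsub S.toFinite
    calc sInf B ≤ {i : V | ¬(b i < x ∧ d i < y) ∧ ¬(x < a i ∧ y < c i)}.ncard :=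
          Nat.sInf_le ⟨x, y, hxl, hxr, rfl⟩
      _ ≤ S.ncard := hle
      _ = sInf A := hcard.symm
  omega
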